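/- In the setting of the filtration lemma (Lemma 2.6): let m_N^I = dim_K (K[x_0,...,x_M]_{N−d‖I‖} / L_N^I) and for each I ∈ τ_N choose γ_{I,1},...,γ_{I,m_N^I} ∈ K[x_0,...,x_M]_{N−d‖I‖} whose classes form a basis of K[x_0,...,x_M]_{N−d‖I‖}/L_N^I. Then the classes of {Q_1^{i_1}···Q_n^{i_n}·γ_{I,ℓ} : I = (i_1,...,i_n) ∈ τ_N, 1 ≤ ℓ ≤ m_N^I} form a K-basis of K[x_0,...,x_M]_N / I_K(V)_N. In particular Σ_{I∈τ_N} m_N^I = dim_K K[x_0,...,x_M]_N / I_K(V)_N. -/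

import Mathlib

open MvPolynomial

/-- The index set `τ_N = {I ∈ ℕ^n : d‖I‖ ≤ N}` as a finset. -/
def tauFinset (d n N : ℕ) : Finset (Fin n → ℕ) :=
  (Fintype.piFinset fun _ : Fin n => Finset.range (N + 1)).filter
    (fun I => d * (∑ s, I s) ≤ N)

/-- The filtration space `L_N^I`. -/
def LSpace {K : Type*} [Field K] {M n : ℕ} (d N : ℕ)
    (Q : Fin n → MvPolynomial (Fin (M + 1)) K)
    (IK : Ideal (MvPolynomial (Fin (M + 1)) K)) (I : Fin n → ℕ) :
    Set (MvPolynomial (Fin (M + 1)) K) :=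
  {γ | γ.IsHomogeneous (N - d * ∑ s, I s) ∧
    ∃ (S : Finset (Fin n → ℕ)) (γE : (Fin n → ℕ) → MvPolynomial (Fin (M + 1)) K),
      (∀ E ∈ S, toLex I < toLex E ∧ d * ∑ s, E s ≤ N) ∧
      (∀ E ∈ S, (γE E).IsHomogeneous (N - d * ∑ s, E s)) ∧
      (∏ j, Q j ^ I j) * γ - ∑ E ∈ S, (∏ j, Q j ^ E j) * γE E ∈ IK}

lemma mem_tauFinset_of {d n N : ℕ} (hd : 1 ≤ d) {I : Fin n → ℕ} (h : d * ∑ s, I s ≤ N) :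
    I ∈ tauFinset d n N := by
  simp only [tauFinset, Finset.mem_filter, Fintype.mem_piFinset, Finset.mem_range]
  refine ⟨fun s => ?_, h⟩
  have h1 : ∑ s, I s ≤ d * ∑ s, I s := Nat.le_mul_of_pos_left _ hd
  have h2 := Finset.single_le_sum (f := I) (fun s _ => Nat.zero_le _) (Finset.mem_univ s)
  omega

lemma tauFinset_le {d n N : ℕ} {I : Fin n → ℕ} (h : I ∈ tauFinset d n N) :
    d * ∑ s, I s ≤ N := (Finset.mem_filter.mp h).2


lemma prodpow_hom {K : Type*} [Field K] {M n : ℕ} {d : ℕ}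
    {Q : Fin n → MvPolynomial (Fin (M+1)) K}
    (hQ : ∀ j, (Q j).IsHomogeneous d) (I : Fin n → ℕ) :
    (∏ j, Q j ^ I j).IsHomogeneous (d * ∑ s, I s) := by
  rw [Finset.mul_sum]
  exact MvPolynomial.IsHomogeneous.prod _ _ _ (fun j _ => (hQ j).pow (I j))

open scoped Classical in
lemma span_key {K : Type*} [Field K] {M n d N : ℕ} (hd : 1 ≤ d)
    (IK : Ideal (MvPolynomial (Fin (M + 1)) K))
    (Q : Fin n → MvPolynomial (Fin (M + 1)) K)
    (m : (Fin n → ℕ) → ℕ)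
    (γ : (I : Fin n → ℕ) → Fin (m I) → MvPolynomial (Fin (M + 1)) K)
    (hspan : ∀ I ∈ tauFinset d n N, ∀ f : MvPolynomial (Fin (M + 1)) K,
      f.IsHomogeneous (N - d * ∑ s, I s) →
      ∃ c : Fin (m I) → K, f - ∑ ℓ, C (c ℓ) * γ I ℓ ∈ LSpace d N Q IK I) :
    ∀ (k : ℕ) (I : Fin n → ℕ),
      ((tauFinset d n N).filter (fun E => toLex I < toLex E)).card < k →
      I ∈ tauFinset d n N →
      ∀ g : MvPolynomial (Fin (M+1)) K, g.IsHomogeneous (N - d * ∑ s, I s) →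
      ∃ t : (J : Fin n → ℕ) → Fin (m J) → K,
        (∏ j, Q j ^ I j) * g -
          ∑ J ∈ tauFinset d n N, ∑ ℓ, C (t J ℓ) * ((∏ j, Q j ^ J j) * γ J ℓ) ∈ IK := by
  classical
  intro k
  induction k with
  | zero => intro I h; omega
  | succ k ih =>
    intro I hcard hI g hg
    obtain ⟨c, hc⟩ := hspan I hI g hg
    obtain ⟨-, S, γE, hS1, hS2, hmem⟩ := hc
    have hEτ : ∀ E ∈ S, E ∈ tauFinset d n N := fun E hE => mem_tauFinset_of hd (hS1 E hE).2
    have hcard' : ∀ E ∈ S, ((tauFinset d n N).filter (fun F => toLex E < toLex F)).card < k := by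
      intro E hE
      have hss : (tauFinset d n N).filter (fun F => toLex E < toLex F) ⊂
          (tauFinset d n N).filter (fun F => toLex I < toLex F) := by
        constructor
        · intro F hF
          simp only [Finset.mem_filter] at hF ⊢
          exact ⟨hF.1, lt_trans (hS1 E hE).1 hF.2⟩
        · intro hsub
          have hmemE : E ∈ (tauFinset d n N).filter (fun F => toLex I < toLex F) :=
            Finset.mem_filter.mpr ⟨hEτ E hE, (hS1 E hE).1⟩
          have := hsub hmemE
          simp only [Finset.mem_filter] at this
          exact lt_irrefl _ this.2
      have := Finset.card_lt_card hss
      omega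
    have hex : ∀ E : Fin n → ℕ, ∃ tE : (J : Fin n → ℕ) → Fin (m J) → K, E ∈ S →
        (∏ j, Q j ^ E j) * γE E -
          ∑ J ∈ tauFinset d n N, ∑ ℓ, C (tE J ℓ) * ((∏ j, Q j ^ J j) * γ J ℓ) ∈ IK := by
      intro E
      by_cases hE : E ∈ S
      · obtain ⟨tE0, htE0⟩ := ih E (hcard' E hE) (hEτ E hE) (γE E) (hS2 E hE)
        exact ⟨tE0, fun _ => htE0⟩
      · exact ⟨fun _ _ => 0, fun h => absurd h hE⟩
    choose tE htE using hex
    refine ⟨fun J ℓ =>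
      Function.update (fun J => (0 : Fin (m J) → K)) I c J ℓ + ∑ E ∈ S, tE E J ℓ, ?_⟩
    simp only []
    have key : ∑ J ∈ tauFinset d n N, ∑ ℓ,
          C (Function.update (fun J => (0 : Fin (m J) → K)) I c J ℓ + ∑ E ∈ S, tE E J ℓ)
            * ((∏ j, Q j ^ J j) * γ J ℓ)
        = (∏ j, Q j ^ I j) * (∑ ℓ, C (c ℓ) * γ I ℓ)
          + ∑ E ∈ S, ∑ J ∈ tauFinset d n N, ∑ ℓ,
              C (tE E J ℓ) * ((∏ j, Q j ^ J j) * γ J ℓ) := by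
      simp only [map_add, map_sum, add_mul, Finset.sum_mul, Finset.sum_add_distrib]
      congr 1
      · rw [Finset.mul_sum, Finset.sum_eq_single I]
        · refine Finset.sum_congr rfl fun ℓ _ => ?_
          rw [Function.update_self]
          ring
        · intro J hJ hJI
          rw [Function.update_of_ne hJI]
          simp
        · intro h; exact absurd hI h
      · rw [Finset.sum_comm]
        refine Finset.sum_congr rfl fun E _ => ?_
        rw [Finset.sum_comm]
    rw [key]
    have hY : ∑ E ∈ S, ((∏ j, Q j ^ E j) * γE E -
        ∑ J ∈ tauFinset d n N, ∑ ℓ, C (tE E J ℓ) * ((∏ j, Q j ^ J j) * γ J ℓ)) ∈ IK :=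
      Ideal.sum_mem _ fun E hE => htE E hE
    have heq : (∏ j, Q j ^ I j) * g -
        ((∏ j, Q j ^ I j) * (∑ ℓ, C (c ℓ) * γ I ℓ)
          + ∑ E ∈ S, ∑ J ∈ tauFinset d n N, ∑ ℓ,
              C (tE E J ℓ) * ((∏ j, Q j ^ J j) * γ J ℓ))
        = ((∏ j, Q j ^ I j) * (g - ∑ ℓ, C (c ℓ) * γ I ℓ)
            - ∑ E ∈ S, (∏ j, Q j ^ E j) * γE E)
          + ∑ E ∈ S, ((∏ j, Q j ^ E j) * γE E -
              ∑ J ∈ tauFinset d n N, ∑ ℓ, C (tE E J ℓ) * ((∏ j, Q j ^ J j) * γ J ℓ)) := by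
      rw [Finset.sum_sub_distrib]
      ring
    rw [heq]
    exact Ideal.add_mem _ hmem hY

open scoped Classical in
lemma indep_key {K : Type*} [Field K] {M n d N : ℕ}
    (IK : Ideal (MvPolynomial (Fin (M + 1)) K))
    (Q : Fin n → MvPolynomial (Fin (M + 1)) K)
    (m : (Fin n → ℕ) → ℕ)
    (γ : (I : Fin n → ℕ) → Fin (m I) → MvPolynomial (Fin (M + 1)) K)
    (hγhom : ∀ I ∈ tauFinset d n N, ∀ ℓ, (γ I ℓ).IsHomogeneous (N - d * ∑ s, I s))
    (hindep : ∀ I ∈ tauFinset d n N, ∀ c : Fin (m I) → K,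
      (∑ ℓ, C (c ℓ) * γ I ℓ) ∈ LSpace d N Q IK I → c = 0) :
    ∀ t : (I : Fin n → ℕ) → Fin (m I) → K,
      (∑ I ∈ tauFinset d n N, ∑ ℓ, C (t I ℓ) * ((∏ j, Q j ^ I j) * γ I ℓ)) ∈ IK →
      ∀ I ∈ tauFinset d n N, ∀ ℓ, t I ℓ = 0 := by
  haveI htri : IsTrichotomous (Lex (Fin n → ℕ)) (· < ·) :=
    Pi.isTrichotomous_lex _ _ (wellFounded_lt (α := Fin n))
  intro t ht
  by_contra hcon
  push_neg at hcon
  obtain ⟨I1, hI1τ, ℓ1, hℓ1⟩ := hcon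
  set S' := (tauFinset d n N).filter (fun I => t I ≠ 0) with hS'
  have hne : S'.Nonempty :=
    ⟨I1, Finset.mem_filter.mpr ⟨hI1τ, fun h => hℓ1 (congrFun h ℓ1)⟩⟩
  obtain ⟨I₀m, hI₀m, hmin⟩ : ∃ x ∈ S'.image (toLex : (Fin n → ℕ) → Lex (Fin n → ℕ)),
      ∀ y ∈ S'.image (toLex : (Fin n → ℕ) → Lex (Fin n → ℕ)), ¬ y < x := by
    obtain ⟨x, hx⟩ := Finset.exists_minimal
      (s := S'.image (toLex : (Fin n → ℕ) → Lex (Fin n → ℕ))) (hne.image _)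
    exact ⟨x, hx.1, fun y hy hlt => hlt.not_ge (hx.2 hy hlt.le)⟩
  obtain ⟨I₀, hI₀, rfl⟩ := Finset.mem_image.mp hI₀m
  have hI₀τ : I₀ ∈ tauFinset d n N := (Finset.mem_filter.mp hI₀).1
  set Sgt := (tauFinset d n N).filter (fun E => toLex I₀ < toLex E) with hSgt
  have hI₀Sgt : I₀ ∉ Sgt := by
    simp only [hSgt, Finset.mem_filter]
    exact fun h => lt_irrefl _ h.2
  have hLS : (∑ ℓ, C (t I₀ ℓ) * γ I₀ ℓ) ∈ LSpace d N Q IK I₀ := by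
    refine ⟨MvPolynomial.IsHomogeneous.sum _ _ _ fun ℓ _ => (hγhom I₀ hI₀τ ℓ).C_mul _,
      Sgt, fun E => -(∑ ℓ, C (t E ℓ) * γ E ℓ), ?_, ?_, ?_⟩
    · intro E hE
      simp only [hSgt, Finset.mem_filter] at hE
      exact ⟨hE.2, tauFinset_le hE.1⟩
    · intro E hE
      simp only [hSgt, Finset.mem_filter] at hE
      exact (MvPolynomial.IsHomogeneous.sum _ _ _ fun ℓ _ => (hγhom E hE.1 ℓ).C_mul _).neg
    · have key : (∏ j, Q j ^ I₀ j) * (∑ ℓ, C (t I₀ ℓ) * γ I₀ ℓ)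
          - ∑ E ∈ Sgt, (∏ j, Q j ^ E j) * -(∑ ℓ, C (t E ℓ) * γ E ℓ)
          = ∑ I ∈ insert I₀ Sgt, ∑ ℓ, C (t I ℓ) * ((∏ j, Q j ^ I j) * γ I ℓ) := by
        rw [Finset.sum_insert hI₀Sgt]
        simp only [mul_neg, Finset.sum_neg_distrib, sub_neg_eq_add, Finset.mul_sum]
        refine congrArg₂ (· + ·) ?_ ?_
        · exact Finset.sum_congr rfl fun ℓ _ => by ring
        · exact Finset.sum_congr rfl fun E _ => Finset.sum_congr rfl fun ℓ _ => by ring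
      have hsub : insert I₀ Sgt ⊆ tauFinset d n N := by
        refine Finset.insert_subset hI₀τ ?_
        exact Finset.filter_subset _ _
      have hzero : ∀ I ∈ tauFinset d n N, I ∉ insert I₀ Sgt →
          (∑ ℓ, C (t I ℓ) * ((∏ j, Q j ^ I j) * γ I ℓ)) = 0 := by
        intro I hIτ hIns
        simp only [Finset.mem_insert, hSgt, Finset.mem_filter, not_or] at hIns
        have htI : t I = 0 := by
          by_contra h
          have hIS' : I ∈ S' := Finset.mem_filter.mpr ⟨hIτ, h⟩
          have hnlt : ¬ toLex I < toLex I₀ := hmin _ (Finset.mem_image_of_mem _ hIS')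
          rcases trichotomous_of ((· < ·) : Lex (Fin n → ℕ) → Lex (Fin n → ℕ) → Prop)
              (toLex I) (toLex I₀) with hlt | heq | hgt
          · exact hnlt hlt
          · exact hIns.1 (toLex.injective heq)
          · exact hIns.2 ⟨hIτ, hgt⟩
        simp [htI]
      rw [key, Finset.sum_subset hsub hzero]
      exact ht
  have h0 := hindep I₀ hI₀τ (t I₀) hLS
  exact (Finset.mem_filter.mp hI₀).2 h0

set_option maxHeartbeats 1000000 in
set_option synthInstance.maxHeartbeats 400000 in
/-- Lemma 2.6: if for each `I ∈ τ_N` the classes of `γ_{I,1},…,γ_{I,m_N^I}` form a basis of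
`K[x]_{N−d‖I‖}/L_N^I`, then the classes of the products `Q_1^{i_1}⋯Q_n^{i_n}·γ_{I,ℓ}` form a
`K`-basis of `K[x]_N / I_K(V)_N`; in particular `Σ_{I∈τ_N} m_N^I = dim_K K[x]_N/I_K(V)_N`. -/
theorem filtration_basis (K : Type*) [Field K] [Algebra ℂ K] (M n d N : ℕ)
    (hd : 1 ≤ d) (hn : 1 ≤ n)
    (IV : Ideal (MvPolynomial (Fin (M + 1)) ℂ))
    (hhom : ∀ p ∈ IV, ∀ k : ℕ, homogeneousComponent k p ∈ IV)
    (IK : Ideal (MvPolynomial (Fin (M + 1)) K))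
    (hIK : IK = Ideal.map (MvPolynomial.map (algebraMap ℂ K)) IV)
    (Q : Fin n → MvPolynomial (Fin (M + 1)) K) (hQ : ∀ j, (Q j).IsHomogeneous d)
    (m : (Fin n → ℕ) → ℕ)
    (γ : (I : Fin n → ℕ) → Fin (m I) → MvPolynomial (Fin (M + 1)) K)
    (hγhom : ∀ I ∈ tauFinset d n N, ∀ ℓ, (γ I ℓ).IsHomogeneous (N - d * ∑ s, I s))
    (hspan : ∀ I ∈ tauFinset d n N, ∀ f : MvPolynomial (Fin (M + 1)) K,
      f.IsHomogeneous (N - d * ∑ s, I s) →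
      ∃ c : Fin (m I) → K, f - ∑ ℓ, C (c ℓ) * γ I ℓ ∈ LSpace d N Q IK I)
    (hindep : ∀ I ∈ tauFinset d n N, ∀ c : Fin (m I) → K,
      (∑ ℓ, C (c ℓ) * γ I ℓ) ∈ LSpace d N Q IK I → c = 0) :
    (∀ t : (I : Fin n → ℕ) → Fin (m I) → K,
      (∑ I ∈ tauFinset d n N, ∑ ℓ, C (t I ℓ) * ((∏ j, Q j ^ I j) * γ I ℓ)) ∈ IK →
      ∀ I ∈ tauFinset d n N, ∀ ℓ, t I ℓ = 0) ∧
    (∀ f : MvPolynomial (Fin (M + 1)) K, f.IsHomogeneous N →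
      ∃ t : (I : Fin n → ℕ) → Fin (m I) → K,
        f - ∑ I ∈ tauFinset d n N, ∑ ℓ, C (t I ℓ) * ((∏ j, Q j ^ I j) * γ I ℓ) ∈ IK) ∧
    ((∑ I ∈ tauFinset d n N, m I) +
        Module.finrank K ↥((Submodule.restrictScalars K IK) ⊓
          homogeneousSubmodule (Fin (M + 1)) K N)
      = Module.finrank K ↥(homogeneousSubmodule (Fin (M + 1)) K N)) := by
    classical
  have part1 := indep_key IK Q m γ hγhom hindep
  have part2 : ∀ f : MvPolynomial (Fin (M + 1)) K, f.IsHomogeneous N →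
      ∃ t : (I : Fin n → ℕ) → Fin (m I) → K,
        f - ∑ I ∈ tauFinset d n N, ∑ ℓ, C (t I ℓ) * ((∏ j, Q j ^ I j) * γ I ℓ) ∈ IK := by
    intro f hf
    have h0τ : (0 : Fin n → ℕ) ∈ tauFinset d n N := mem_tauFinset_of hd (by simp)
    have hf' : f.IsHomogeneous (N - d * ∑ s, (0 : Fin n → ℕ) s) := by simpa using hf
    obtain ⟨t, ht⟩ := span_key hd IK Q m γ hspan
      (((tauFinset d n N).filter
        (fun E => toLex (0 : Fin n → ℕ) < toLex E)).card + 1) 0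
      (Nat.lt_succ_self _) h0τ f hf'
    simp only [Pi.zero_apply, pow_zero, Finset.prod_const_one, one_mul] at ht
    exact ⟨t, ht⟩
  refine ⟨part1, part2, ?_⟩
  set V := homogeneousSubmodule (Fin (M + 1)) K N with hVdef
  set W := (Submodule.restrictScalars K IK) ⊓ V with hWdef
  have hWV : W ≤ V := inf_le_right
  haveI : FiniteDimensional K ↥V := by
    apply Submodule.finiteDimensional_of_le
      (S₂ := restrictTotalDegree (Fin (M + 1)) K N)
    intro p hp
    rw [mem_restrictTotalDegree]
    exact ((mem_homogeneousSubmodule _ _).mp hp).totalDegree_le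
  set W₀ : Submodule K ↥V := W.comap V.subtype with hW₀def
  have hquot := Submodule.finrank_quotient_add_finrank W₀
  have hfr : Module.finrank K ↥W₀ = Module.finrank K ↥W :=
    (Submodule.comapSubtypeEquivOfLe hWV).finrank_eq
  have hvV : ∀ (I : Fin n → ℕ), I ∈ tauFinset d n N → ∀ ℓ : Fin (m I),
      (∏ j, Q j ^ I j) * γ I ℓ ∈ V := by
    intro I hIτ ℓ
    rw [hVdef, mem_homogeneousSubmodule]
    have h := (prodpow_hom hQ I).mul (hγhom I hIτ ℓ)
    rwa [Nat.add_sub_cancel' (tauFinset_le hIτ)] at h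
  set u : (Σ I : {x // x ∈ tauFinset d n N}, Fin (m I.1)) → ↥V :=
    fun p => ⟨(∏ j, Q j ^ p.1.1 j) * γ p.1.1 p.2, hvV p.1.1 p.1.2 p.2⟩ with hu
  set b : (Σ I : {x // x ∈ tauFinset d n N}, Fin (m I.1)) → (↥V ⧸ W₀) :=
    fun p => Submodule.Quotient.mk (u p) with hb
  have hreindex : ∀ (t : (J : Fin n → ℕ) → Fin (m J) → K),
      (∑ i : (Σ I : {x // x ∈ tauFinset d n N}, Fin (m I.1)),
        t i.1.1 i.2 • ((∏ j, Q j ^ i.1.1 j) * γ i.1.1 i.2))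
      = ∑ I ∈ tauFinset d n N, ∑ ℓ, C (t I ℓ) * ((∏ j, Q j ^ I j) * γ I ℓ) := by
    intro t
    rw [← Finset.univ_sigma_univ, Finset.sum_sigma]
    rw [Finset.univ_eq_attach,
      ← Finset.sum_attach (tauFinset d n N)
        (fun I => ∑ ℓ, C (t I ℓ) * ((∏ j, Q j ^ I j) * γ I ℓ))]
    exact Finset.sum_congr rfl fun a _ => Finset.sum_congr rfl fun ℓ _ =>
      smul_eq_C_mul _ _
  have hli : LinearIndependent K b := by
    rw [Fintype.linearIndependent_iff]
    intro g hg
    set t : (J : Fin n → ℕ) → Fin (m J) → K :=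
      fun J ℓ => if h : J ∈ tauFinset d n N then g ⟨⟨J, h⟩, ℓ⟩ else 0 with htdef
    have hgt : ∀ i : (Σ I : {x // x ∈ tauFinset d n N}, Fin (m I.1)),
        g i = t i.1.1 i.2 := by
      intro i
      rw [htdef]
      simp only [dif_pos i.1.2]
    have hmk : W₀.mkQ (∑ i, g i • u i) = 0 := by
      rw [map_sum]
      simp only [map_smul, Submodule.mkQ_apply]
      exact hg
    have hmemW₀ : (∑ i, g i • u i) ∈ W₀ := by
      rwa [← Submodule.Quotient.mk_eq_zero W₀, ← Submodule.mkQ_apply]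
    have hmemW : ((∑ i, g i • u i : ↥V) : MvPolynomial (Fin (M + 1)) K) ∈ W := by
      rw [hW₀def, Submodule.mem_comap] at hmemW₀
      exact hmemW₀
    have hcoe : ((∑ i, g i • u i : ↥V) : MvPolynomial (Fin (M + 1)) K)
        = ∑ I ∈ tauFinset d n N, ∑ ℓ, C (t I ℓ) * ((∏ j, Q j ^ I j) * γ I ℓ) := by
      rw [← hreindex t]
      push_cast
      exact Finset.sum_congr rfl fun i _ => by rw [hgt i]
    rw [hcoe] at hmemW
    have hIKmem : (∑ I ∈ tauFinset d n N, ∑ ℓ, C (t I ℓ) *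
        ((∏ j, Q j ^ I j) * γ I ℓ)) ∈ IK := hmemW.1
    have hzero := part1 t hIKmem
    intro i
    rw [hgt i]
    exact hzero i.1.1 i.1.2 i.2
  have hsp : ⊤ ≤ Submodule.span K (Set.range b) := by
    rintro x -
    obtain ⟨⟨f, hfV⟩, rfl⟩ := Submodule.Quotient.mk_surjective W₀ x
    have hf : f.IsHomogeneous N := (mem_homogeneousSubmodule _ _).mp hfV
    obtain ⟨t, ht⟩ := part2 f hf
    have hSV : (∑ I ∈ tauFinset d n N, ∑ ℓ, C (t I ℓ) *
        ((∏ j, Q j ^ I j) * γ I ℓ)) ∈ V :=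
      Submodule.sum_mem _ fun I hI => Submodule.sum_mem _ fun ℓ _ => by
        rw [← smul_eq_C_mul]
        exact V.smul_mem _ (hvV I hI ℓ)
    have hdiff : (⟨f, hfV⟩ : ↥V) - ⟨_, hSV⟩ ∈ W₀ := by
      rw [hW₀def, Submodule.mem_comap]
      refine ⟨?_, Submodule.sub_mem _ hfV hSV⟩
      simpa using ht
    have hmkeq : Submodule.Quotient.mk (p := W₀) (⟨f, hfV⟩ : ↥V)
        = Submodule.Quotient.mk (⟨_, hSV⟩ : ↥V) :=
      (Submodule.Quotient.eq W₀).mpr hdiff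
    rw [hmkeq]
    have heq2 : (∑ i, t i.1.1 i.2 • u i : ↥V) = (⟨_, hSV⟩ : ↥V) := by
      apply Subtype.ext
      push_cast
      exact hreindex t
    rw [← heq2, ← Submodule.mkQ_apply, map_sum]
    refine Submodule.sum_mem _ fun i _ => ?_
    rw [map_smul]
    exact Submodule.smul_mem _ _ (Submodule.subset_span ⟨i, rfl⟩)
  have hfrq : Module.finrank K (↥V ⧸ W₀) = ∑ I ∈ tauFinset d n N, m I := by
    rw [Module.finrank_eq_card_basis (Module.Basis.mk hli hsp)]
    rw [Fintype.card_sigma]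
    simp only [Fintype.card_fin]
    rw [Finset.univ_eq_attach]
    exact Finset.sum_attach _ _
  rw [← hfr, ← hfrq]
  omega
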